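/- Let 0 ≤ n_1 < n_2 < ... < n_k be strictly increasing nonnegative integers with ∑ n_i = n + k(k-1)/2. In the graph whose vertices are strictly increasing k-tuples of nonnegative integers and whose edges increase one coordinate by 1 (preserving strict monotonicity), the number of directed paths from (0,1,...,k-1) to (n_1,...,n_k) equals (n!/∏ n_i!) · ∏_{i<j}(n_j - n_i). -/

import Mathlib

open Finset

/-- A directed path of length `n` from `v` to `u` in the restricted Young graph `Y_k`:
vertices are strictly increasing `k`-tuples of nonnegative integers, each step
increases exactly one coordinate by `1`. -/
def YoungPath (k n : ℕ) (v u : Fin k → ℕ) : Type :=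
  { f : Fin (n + 1) → (Fin k → ℕ) //
      f 0 = v ∧ f (Fin.last n) = u ∧ (∀ j, StrictMono (f j)) ∧
      ∀ j : Fin n, ∃ i : Fin k,
        f j.succ = Function.update (f j.castSucc) i (f j.castSucc i + 1) }

open Polynomial

namespace YP
variable {k n : ℕ} {v u : Fin k → ℕ}

lemma mono (f : YoungPath k n v u) : Monotone f.1 := by
  rw [Fin.monotone_iff_le_succ]
  intro j
  obtain ⟨i, hi⟩ := f.2.2.2.2 j
  rw [hi]
  intro a
  rcases eq_or_ne a i with rfl | h
  · simp
  · simp [Function.update_apply, h]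

lemma le_target (f : YoungPath k n v u) (j : Fin (n + 1)) (a : Fin k) : f.1 j a ≤ u a := by
  have := mono f (Fin.le_last j)
  rw [f.2.2.1] at this
  exact this a

instance : Finite (YoungPath k n v u) := by
  apply Finite.of_injective
    (fun f : YoungPath k n v u => fun (j : Fin (n+1)) (a : Fin k) =>
      (⟨f.1 j a, Nat.lt_succ_of_le (le_target f j a)⟩ : Fin (u a + 1)))
  intro f g h
  apply Subtype.ext
  funext j a
  exact congrArg Fin.val (congrFun (congrFun h j) a)

lemma card_zero (hv : StrictMono v) : Nat.card (YoungPath k 0 v v) = 1 := by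
  have : Unique (YoungPath k 0 v v) := by
    refine ⟨⟨⟨fun _ => v, rfl, ?_, fun _ => hv, fun j => j.elim0⟩⟩, ?_⟩
    · rfl
    · rintro ⟨f, h0, -⟩
      apply Subtype.ext
      funext j
      have hj : j = 0 := Fin.ext (by omega)
      subst hj
      exact h0
  exact Nat.card_unique

/-- the predecessor tuple -/
def dec (c : Fin k → ℕ) (i : Fin k) : Fin k → ℕ := Function.update c i (c i - 1)

/-- valid last-step indices -/
def S (c : Fin k → ℕ) : Finset (Fin k) :=
  univ.filter (fun i => 0 < c i ∧ StrictMono (dec c i))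

lemma update_dec {c : Fin k → ℕ} {i : Fin k} (hi : 0 < c i) :
    Function.update (dec c i) i (dec c i i + 1) = c := by
  funext a
  rcases eq_or_ne a i with rfl | h
  · simp [dec]; omega
  · simp [dec, Function.update_apply, h]

lemma card_succ (hc : StrictMono u) :
    Nat.card (YoungPath k (n + 1) v u) = ∑ i ∈ S u, Nat.card (YoungPath k n v (dec u i)) := by
  classical
  -- the snoc map
  have main : Nat.card (YoungPath k (n + 1) v u)
      = Nat.card ((i : {i // i ∈ S u}) × YoungPath k n v (dec u i.1)) := by
    apply (Nat.card_congr (Equiv.ofBijective ?_ ?_)).symm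
    · intro z
      refine ⟨Fin.snoc z.2.1 u, ?_, ?_, ?_, ?_⟩
      · have : (0 : Fin (n + 2)) = Fin.castSucc 0 := rfl
        rw [this, Fin.snoc_castSucc, z.2.2.1]
      · rw [Fin.snoc_last]
      · intro j
        refine Fin.lastCases ?_ ?_ j
        · rw [Fin.snoc_last]; exact hc
        · intro j'; rw [Fin.snoc_castSucc]; exact z.2.2.2.2.1 j'
      · intro j
        refine Fin.lastCases ?_ ?_ j
        · refine ⟨z.1.1, ?_⟩
          rw [Fin.succ_last, Fin.snoc_last, Fin.snoc_castSucc, z.2.2.2.1]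
          have hi := z.1.2
          simp only [S, mem_filter] at hi
          exact (update_dec hi.2.1).symm
        · intro j'
          obtain ⟨i', hi'⟩ := z.2.2.2.2.2 j'
          refine ⟨i', ?_⟩
          rw [Fin.succ_castSucc, Fin.snoc_castSucc, Fin.snoc_castSucc]; exact hi'
    constructor
    · rintro ⟨⟨i, hi⟩, g⟩ ⟨⟨i', hi'⟩, g'⟩ h
      have hf := congrArg (fun z => z.1) h
      simp only at hf
      have hg : g.1 = g'.1 := by
        funext j
        have := congrFun hf (Fin.castSucc j)
        rwa [Fin.snoc_castSucc, Fin.snoc_castSucc] at this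
      have hii : i = i' := by
        have h1 : dec u i = dec u i' := by
          rw [← g.2.2.1, ← g'.2.2.1, hg]
        by_contra hne
        simp only [S, mem_filter] at hi hi'
        have h01 : 0 < u i := hi.2.1
        have := congrFun h1 i
        simp only [dec, Function.update_self, Function.update_of_ne hne] at this
        omega
      subst hii
      have : g = g' := Subtype.ext hg
      subst this
      rfl
    · rintro ⟨f, h0, hlast, hsm, hstep⟩
      obtain ⟨i, hi⟩ := hstep (Fin.last n)
      rw [Fin.succ_last, hlast] at hi
      set u' : Fin k → ℕ := f (Fin.castSucc (Fin.last n)) with hu'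
      have hci : u i = u' i + 1 := by rw [hi]; simp
      have hdec : dec u i = u' := by
        funext a
        rcases eq_or_ne a i with rfl | h
        · simp [dec]; omega
        · simp only [dec, Function.update_apply, if_neg h, hi, if_neg h]
      have hiS : i ∈ S u := by
        simp only [S, mem_filter]
        exact ⟨mem_univ _, by omega, by rw [hdec]; exact hsm _⟩
      refine ⟨⟨⟨i, hiS⟩, ⟨fun j => f (Fin.castSucc j), ?_, ?_, fun j => hsm _, ?_⟩⟩, ?_⟩
      · show f (Fin.castSucc 0) = v
        rw [Fin.castSucc_zero, h0]
      · rw [hdec]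
      · intro j
        obtain ⟨i'', hi''⟩ := hstep (Fin.castSucc j)
        refine ⟨i'', ?_⟩
        show f (Fin.castSucc j.succ) = _
        rw [← Fin.succ_castSucc]
        exact hi''
      · apply Subtype.ext
        funext j
        show (Fin.snoc (fun j => f (Fin.castSucc j)) u : Fin (n + 2) → Fin k → ℕ) j = f j
        refine Fin.lastCases ?_ ?_ j
        · rw [Fin.snoc_last, hlast]
        · intro j'; rw [Fin.snoc_castSucc]
  rw [main]
  have : ∀ i : {i // i ∈ S u}, Fintype (YoungPath k n v (dec u i.1)) := fun i => Fintype.ofFinite _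
  rw [Nat.card_eq_fintype_card, Fintype.card_sigma]
  rw [← Finset.sum_coe_sort (S u) (fun i => Nat.card (YoungPath k n v (dec u i)))]
  congr 1
  funext i
  rw [Nat.card_eq_fintype_card]

end YP



noncomputable def fallMat {k : ℕ} (x : Fin k → ℚ) : Matrix (Fin k) (Fin k) ℚ :=
  Matrix.of fun m j => (descPochhammer ℚ (m : ℕ)).eval (x j)

lemma det_fallMat {k : ℕ} (x : Fin k → ℚ) :
    (fallMat x).det = ∏ i : Fin k, ∏ j ∈ Ioi i, (x j - x i) := by
  rw [← Matrix.det_vandermonde,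
    Matrix.det_eval_matrixOfPolynomials_eq_det_vandermonde x (fun m => descPochhammer ℚ (m : ℕ))
      (fun i => descPochhammer_natDegree ℚ i) (fun i => monic_descPochhammer ℚ i),
    ← Matrix.det_transpose]
  rfl

lemma eval_shift (y : ℚ) (m : ℕ) :
    y * (descPochhammer ℚ m).eval (y - 1) = (descPochhammer ℚ m).eval y * (y - m) := by
  have h1 : (descPochhammer ℚ (m + 1)).eval y = y * (descPochhammer ℚ m).eval (y - 1) := by
    rw [descPochhammer_succ_left]
    simp [eval_comp]
  rw [← h1, descPochhammer_succ_eval]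

lemma key_identity {k : ℕ} (x : Fin k → ℚ) :
    ∑ i, x i * ∏ a : Fin k, ∏ b ∈ Ioi a,
        (Function.update x i (x i - 1) b - Function.update x i (x i - 1) a)
      = (∑ i, x i - ∑ i : Fin k, (i : ℚ)) * ∏ a : Fin k, ∏ b ∈ Ioi a, (x b - x a) := by
  classical
  set A := fallMat x with hA
  have hupd : ∀ i : Fin k, fallMat (Function.update x i (x i - 1)) =
      A.updateCol i (fun m => (descPochhammer ℚ (m : ℕ)).eval (x i - 1)) := by
    intro i
    ext m j
    rw [Matrix.updateCol_apply]
    by_cases h : j = i <;> simp [hA, fallMat, h, Function.update_apply]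
  have step : ∀ i : Fin k,
      x i * ∏ a : Fin k, ∏ b ∈ Ioi a,
        (Function.update x i (x i - 1) b - Function.update x i (x i - 1) a)
      = x i * A.det - (A.updateCol i (fun m => ((m : Fin k) : ℚ) * A m i)).det := by
    intro i
    rw [← det_fallMat, hupd i, ← Matrix.det_updateCol_smul]
    have hcol : (x i • fun m : Fin k => (descPochhammer ℚ (m : ℕ)).eval (x i - 1))
        = (fun m : Fin k => x i * A m i) - (fun m : Fin k => ((m : Fin k) : ℚ) * A m i) := by
      funext m
      simp only [Pi.smul_apply, smul_eq_mul, Pi.sub_apply]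
      rw [eval_shift]
      show _ = x i * (descPochhammer ℚ (m : ℕ)).eval (x i) - (m : ℚ) * (descPochhammer ℚ (m : ℕ)).eval (x i)
      ring
    rw [hcol, sub_eq_add_neg, Matrix.det_updateCol_add]
    have e1 : (A.updateCol i fun m : Fin k => x i * A m i).det = x i * A.det := by
      have : (fun m : Fin k => x i * A m i) = x i • fun m => A m i := rfl
      rw [this, Matrix.det_updateCol_smul, Matrix.updateCol_eq_self]
    have e2 : (A.updateCol i (-fun m : Fin k => ((m : Fin k) : ℚ) * A m i)).det
        = -(A.updateCol i fun m : Fin k => ((m : Fin k) : ℚ) * A m i).det := by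
      have : (-fun m : Fin k => ((m : Fin k) : ℚ) * A m i)
          = (-1 : ℚ) • fun m : Fin k => ((m : Fin k) : ℚ) * A m i := by
        funext m; simp
      rw [this, Matrix.det_updateCol_smul]; ring
    rw [e1, e2]; ring
  rw [Finset.sum_congr rfl fun i _ => step i, Finset.sum_sub_distrib, ← Finset.sum_mul]
  have htr : ∑ i : Fin k, (A.updateCol i fun m => ((m : Fin k) : ℚ) * A m i).det
      = (∑ i : Fin k, (i : ℚ)) * A.det := by
    have : ∀ i : Fin k, (A.updateCol i fun m => ((m : Fin k) : ℚ) * A m i).det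
        = ∑ m : Fin k, A.adjugate i m * (((m : Fin k) : ℚ) * A m i) := by
      intro i
      rw [← Matrix.cramer_apply, Matrix.cramer_eq_adjugate_mulVec]
      rfl
    rw [Finset.sum_congr rfl fun i _ => this i, Finset.sum_comm]
    have : ∀ m : Fin k, ∑ i : Fin k, A.adjugate i m * (((m : Fin k) : ℚ) * A m i)
        = ((m : Fin k) : ℚ) * A.det := by
      intro m
      have h2 : (A * A.adjugate) m m = A.det := by
        rw [Matrix.mul_adjugate]; simp
      rw [← h2, Matrix.mul_apply]
      rw [Finset.mul_sum]
      congr 1; funext i; ring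
    rw [Finset.sum_congr rfl fun m _ => this m, ← Finset.sum_mul]
  rw [htr, det_fallMat, sub_mul]


lemma prod_pairs {k : ℕ} (f : Fin k → Fin k → ℚ) :
    ∏ p ∈ univ.filter (fun p : Fin k × Fin k => p.1 < p.2), f p.1 p.2
      = ∏ i : Fin k, ∏ j ∈ Ioi i, f i j := by
  rw [Finset.prod_sigma']
  refine Finset.prod_bij (fun (p : Fin k × Fin k) _ => (⟨p.1, p.2⟩ : Σ _ : Fin k, Fin k)) ?_ ?_ ?_ ?_
  · rintro ⟨a, b⟩ h
    simp only [Finset.mem_filter, Finset.mem_univ, true_and] at h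
    simp only [Finset.mem_sigma, Finset.mem_univ, Finset.mem_Ioi, true_and]
    exact h
  · rintro ⟨a, b⟩ h ⟨a', b'⟩ h' hab
    cases hab
    rfl
  · rintro ⟨a, b⟩ h
    simp only [Finset.mem_sigma, Finset.mem_univ, Finset.mem_Ioi, true_and] at h
    exact ⟨(a, b), by simp [h], rfl⟩
  · rintro ⟨a, b⟩ h
    rfl

lemma key_identity' {k : ℕ} (x : Fin k → ℚ) :
    ∑ i, x i * ∏ p ∈ univ.filter (fun p : Fin k × Fin k => p.1 < p.2),
        (Function.update x i (x i - 1) p.2 - Function.update x i (x i - 1) p.1)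
      = (∑ i, x i - ∑ i : Fin k, (i : ℚ)) *
        ∏ p ∈ univ.filter (fun p : Fin k × Fin k => p.1 < p.2), (x p.2 - x p.1) := by
  rw [prod_pairs fun a b => x b - x a,
    Finset.sum_congr rfl fun i _ => by
      rw [prod_pairs fun a b => Function.update x i (x i - 1) b - Function.update x i (x i - 1) a]]
  exact key_identity x

lemma coe_le_strictMono {k : ℕ} {c : Fin k → ℕ} (h : StrictMono c) :
    ∀ m (hm : m < k), m ≤ c ⟨m, hm⟩ := by
  intro m
  induction m with
  | zero => intro hm; exact Nat.zero_le _
  | succ m ih =>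
    intro hm
    have h1 := h (show (⟨m, by omega⟩ : Fin k) < ⟨m + 1, hm⟩ from by simp [Fin.lt_def])
    have h2 := ih (by omega)
    omega

lemma sum_fin_id (k : ℕ) : ∑ i : Fin k, (i : ℕ) = k * (k - 1) / 2 :=
  (Fin.sum_univ_eq_sum_range (fun m => m) k).trans (Finset.sum_range_id k)

lemma staircase_prod {m : ℕ} :
    ∏ i : Fin (m + 1), ∏ j ∈ Ioi i, ((j : ℚ) - (i : ℚ)) = ∏ i : Fin (m + 1), ((i : ℕ).factorial : ℚ) := by
  have h := Matrix.det_vandermonde_id_eq_superFactorial (R := ℚ) m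
  rw [Matrix.det_vandermonde] at h
  rw [h, ← Nat.prod_range_succ_factorial m]
  push_cast
  rw [Fin.prod_univ_eq_prod_range (fun i => ((i.factorial : ℚ)))]

/-- The number of paths in the restricted Young graph from `(0,1,…,k-1)` to a strictly
increasing tuple `(n₁,…,n_k)` with `∑ nᵢ = n + k(k-1)/2` is `(n!/∏ nᵢ!) ∏_{i<j}(n_j-n_i)`. -/
theorem stmt_8 (k n : ℕ) (hk : 0 < k) (c : Fin k → ℕ) (hmono : StrictMono c)
    (hsum : ∑ i, c i = n + k * (k - 1) / 2) :
    (Nat.card (YoungPath k n (fun i => (i : ℕ)) c) : ℚ) =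
      (n.factorial : ℚ) / (∏ i, ((c i).factorial : ℚ)) *
        ∏ p ∈ Finset.univ.filter (fun p : Fin k × Fin k => p.1 < p.2),
          ((c p.2 : ℚ) - (c p.1 : ℚ)) := by
  induction n generalizing c with
  | zero =>
    have hc : c = fun i : Fin k => (i : ℕ) := by
      rw [← sum_fin_id k] at hsum
      have hle : ∀ i ∈ (univ : Finset (Fin k)), (i : ℕ) ≤ c i :=
        fun i _ => coe_le_strictMono hmono i.1 i.2
      have heq := (Finset.sum_eq_sum_iff_of_le hle).mp (by omega)
      funext i
      exact (heq i (mem_univ i)).symm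
    subst hc
    rw [YP.card_zero hmono]
    obtain ⟨m, rfl⟩ : ∃ m, k = m + 1 := ⟨k - 1, by omega⟩
    rw [prod_pairs (fun a b => ((b : ℚ) - (a : ℚ))), staircase_prod]
    have hne : (∏ i : Fin (m + 1), ((i : ℕ).factorial : ℚ)) ≠ 0 :=
      Finset.prod_ne_zero_iff.mpr fun i _ => Nat.cast_ne_zero.mpr (Nat.factorial_ne_zero _)
    rw [Nat.cast_one, Nat.factorial_zero, Nat.cast_one]
    field_simp
  | succ n ih =>
    classical
    set x : Fin k → ℚ := fun i => (c i : ℚ) with hx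
    have hT : ∑ i : Fin k, (i : ℕ) = k * (k - 1) / 2 := sum_fin_id k
    -- each term of the recurrence
    have hterm : ∀ i ∈ YP.S c,
        (Nat.card (YoungPath k n (fun i => (i : ℕ)) (YP.dec c i)) : ℚ)
          = (n.factorial : ℚ) / (∏ j, ((c j).factorial : ℚ)) *
            (x i * ∏ p ∈ univ.filter (fun p : Fin k × Fin k => p.1 < p.2),
              (Function.update x i (x i - 1) p.2 - Function.update x i (x i - 1) p.1)) := by
      intro i hi
      simp only [YP.S, mem_filter] at hi
      obtain ⟨-, hpos, hsm⟩ := hi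
      have hci : c i ≤ ∑ j, c j := Finset.single_le_sum (fun j _ => Nat.zero_le _) (mem_univ i)
      have hsum' : ∑ j, YP.dec c i j = n + k * (k - 1) / 2 := by
        rw [show (∑ j, YP.dec c i j) = (c i - 1) + ∑ j ∈ univ.erase i, c j from ?_]
        · have := Finset.sum_erase_add univ c (mem_univ i)
          omega
        · rw [YP.dec, Finset.sum_update_of_mem (mem_univ i)]
          congr 1
          rw [← Finset.sdiff_singleton_eq_erase]
      rw [ih (YP.dec c i) hsm hsum']
      have hcast : (fun j => ((YP.dec c i j : ℕ) : ℚ)) = Function.update x i (x i - 1) := by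
        funext j
        rcases eq_or_ne j i with rfl | h
        · simp only [YP.dec, Function.update_self]
          push_cast [hpos]
          ring
        · simp only [YP.dec, Function.update_of_ne h]; rfl
      have hfact : (∏ j, ((YP.dec c i j).factorial : ℚ)) * (c i : ℚ)
          = ∏ j, ((c j).factorial : ℚ) := by
        have h1 : (fun j => ((YP.dec c i j).factorial : ℚ))
            = Function.update (fun j => ((c j).factorial : ℚ)) i (((c i - 1).factorial : ℚ)) := by
          funext j
          rcases eq_or_ne j i with rfl | h
          · simp [YP.dec]
          · simp [YP.dec, Function.update_of_ne h]
        rw [h1, Finset.prod_update_of_mem (mem_univ i),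
          ← Finset.mul_prod_erase univ _ (mem_univ i), ← Finset.sdiff_singleton_eq_erase]
        obtain ⟨a, ha⟩ : ∃ a, c i = a + 1 := ⟨c i - 1, by omega⟩
        rw [ha]
        simp only [Nat.add_sub_cancel, Nat.factorial_succ]
        push_cast
        ring
      have hΔ : ∏ p ∈ univ.filter (fun p : Fin k × Fin k => p.1 < p.2),
            (((YP.dec c i p.2 : ℕ) : ℚ) - ((YP.dec c i p.1 : ℕ) : ℚ))
          = ∏ p ∈ univ.filter (fun p : Fin k × Fin k => p.1 < p.2),
            (Function.update x i (x i - 1) p.2 - Function.update x i (x i - 1) p.1) := by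
        refine Finset.prod_congr rfl fun p _ => ?_
        rw [← hcast]
      rw [hΔ]
      have hne : (∏ j, ((YP.dec c i j).factorial : ℚ)) ≠ 0 :=
        Finset.prod_ne_zero_iff.mpr fun j _ => Nat.cast_ne_zero.mpr (Nat.factorial_ne_zero _)
      have hne2 : (∏ j, ((c j).factorial : ℚ)) ≠ 0 :=
        Finset.prod_ne_zero_iff.mpr fun j _ => Nat.cast_ne_zero.mpr (Nat.factorial_ne_zero _)
      have hcine : (c i : ℚ) ≠ 0 := Nat.cast_ne_zero.mpr (by omega)
      field_simp
      rw [← hfact]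
      ring
    -- terms outside S vanish
    have hvanish : ∀ i : Fin k, i ∉ YP.S c →
        x i * ∏ p ∈ univ.filter (fun p : Fin k × Fin k => p.1 < p.2),
          (Function.update x i (x i - 1) p.2 - Function.update x i (x i - 1) p.1) = 0 := by
      intro i hi
      simp only [YP.S, mem_filter, mem_univ, true_and, not_and] at hi
      by_cases hpos : 0 < c i
      · have hnsm := hi hpos
        have hex : ∃ a, a < i ∧ c a = c i - 1 := by
          by_contra hcon
          push_neg at hcon
          apply hnsm
          intro p q hpq
          simp only [YP.dec]
          by_cases hp : p = i
          · subst hp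
            by_cases hq : q = p
            · subst hq
              exact absurd hpq (lt_irrefl _)
            · rw [Function.update_self, Function.update_of_ne hq]
              have := hmono hpq
              omega
          · by_cases hq : q = i
            · subst hq
              rw [Function.update_of_ne hp, Function.update_self]
              have h3 := hcon p hpq
              have h4 := hmono hpq
              omega
            · rw [Function.update_of_ne hp, Function.update_of_ne hq]
              exact hmono hpq
        obtain ⟨a, hai, hca⟩ := hex
        apply mul_eq_zero_of_right
        refine Finset.prod_eq_zero (i := (a, i)) (by simp [hai]) ?_
        simp only [Function.update_self, Function.update_of_ne (ne_of_lt hai)]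
        show x i - 1 - x a = 0
        have hci2 : c i = c a + 1 := by omega
        show (c i : ℚ) - 1 - (c a : ℚ) = 0
        rw [hci2]
        push_cast
        ring
      · apply mul_eq_zero_of_left
        have h0 : c i = 0 := by omega
        show (c i : ℚ) = 0
        rw [h0, Nat.cast_zero]
    rw [YP.card_succ hmono, Nat.cast_sum,
      Finset.sum_congr rfl hterm,
      Finset.sum_subset (Finset.subset_univ (YP.S c))
        (fun i _ hiS => by rw [hvanish i hiS, mul_zero]),
      ← Finset.mul_sum, key_identity']
    have hsQ : (∑ i, x i) - (∑ i : Fin k, (i : ℚ)) = (n + 1 : ℚ) := by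
      have h1 : ((∑ i, c i : ℕ) : ℚ) = ((n + 1 + k * (k - 1) / 2 : ℕ) : ℚ) :=
        congrArg (fun z : ℕ => (z : ℚ)) hsum
      push_cast at h1
      have h2 : ((∑ i : Fin k, (i : ℕ) : ℕ) : ℚ) = ((k * (k - 1) / 2 : ℕ) : ℚ) :=
        congrArg (fun z : ℕ => (z : ℚ)) hT
      push_cast at h2
      rw [hx]
      push_cast
      rw [h1, ← h2]
      ring
    rw [hsQ]
    have hne2 : (∏ j, ((c j).factorial : ℚ)) ≠ 0 :=
      Finset.prod_ne_zero_iff.mpr fun j _ => Nat.cast_ne_zero.mpr (Nat.factorial_ne_zero _)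
    rw [Nat.factorial_succ]
    push_cast
    field_simp
    ring
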